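/- Suppose κ < θ are ordinals with κ a limit ordinal and V_κ ≺_{Σ₁} V_θ. Then V_κ satisfies Zermelo set theory with choice (ZC): extensionality, foundation, pairing, union, power set, infinity, choice, and the full separation scheme. -/

import Mathlib

open FirstOrder FirstOrder.Language Cardinal Ordinal

universe u

namespace Paper

noncomputable section

/-- The language of set theory: a single binary relation. -/
abbrev L : FirstOrder.Language := FirstOrder.Language.graph

/-- The membership relation symbol. -/
abbrev memRel : L.Relations 2 := FirstOrder.Language.adj

/-- Any class of ZF sets is an `L`-structure under `∈`. -/
instance zfStructure (S : Set ZFSet) : L.Structure S where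
  funMap := fun f _ => f.elim
  RelMap := fun r v => match r with
    | .adj => (v 0 : ZFSet) ∈ (v 1 : ZFSet)

/-- The rank-initial segment `V_o` of the cumulative hierarchy, as a class of ZF sets. -/
def Vset (o : Ordinal.{u}) : Set ZFSet.{u} := {x | x.rank < o}

/-- A transitive class of ZF sets. -/
def IsTransClass (S : Set ZFSet) : Prop := ∀ x ∈ S, x.toSet ⊆ S

abbrev BF (α : Type) (n : ℕ) : Type := L.BoundedFormula α n

/-- The atomic membership formula `t ∈ u`. -/
def memF {α : Type} {n : ℕ} (t u : L.Term (α ⊕ Fin n)) : BF α n :=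
  memRel.boundedFormula₂ t u

/-- Lift a term to a context with one more bound variable. -/
def liftT {α : Type} {n : ℕ} (t : L.Term (α ⊕ Fin n)) : L.Term (α ⊕ Fin (n + 1)) :=
  t.relabel (Sum.map id Fin.castSucc)

/-- Δ₀ formulas: built from quantifier-free formulas by propositional connectives and
bounded quantifiers `∃ x ∈ t` and `∀ x ∈ t`. -/
inductive IsDeltaZero {α : Type} : ∀ {n : ℕ}, BF α n → Prop
  | of_isQF {n} {φ : BF α n} : φ.IsQF → IsDeltaZero φ
  | imp {n} {φ ψ : BF α n} : IsDeltaZero φ → IsDeltaZero ψ → IsDeltaZero (φ.imp ψ)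
  | bex {n} (t : L.Term (α ⊕ Fin n)) {φ : BF α (n + 1)} : IsDeltaZero φ →
      IsDeltaZero ((memF (Term.var (Sum.inr (Fin.last n))) (liftT t) ⊓ φ).ex)
  | ball {n} (t : L.Term (α ⊕ Fin n)) {φ : BF α (n + 1)} : IsDeltaZero φ →
      IsDeltaZero ((memF (Term.var (Sum.inr (Fin.last n))) (liftT t) ⟹ φ).all)

/-- The Lévy hierarchy: `IsSP true k φ` means `φ` is `Σ_k`; `IsSP false k φ` means `Π_k`. -/
inductive IsSP {α : Type} : Bool → ℕ → ∀ {n : ℕ}, BF α n → Prop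
  | of_deltaZero {b k n} {φ : BF α n} : IsDeltaZero φ → IsSP b k φ
  | incl {b k n} {φ : BF α n} : IsSP (!b) k φ → IsSP b (k + 1) φ
  | ex {k n} {φ : BF α (n + 1)} : IsSP true (k + 1) φ → IsSP true (k + 1) φ.ex
  | all {k n} {φ : BF α (n + 1)} : IsSP false (k + 1) φ → IsSP false (k + 1) φ.all

/-- `φ` is a `Σ_k` formula. -/
def IsSigma {α : Type} (k : ℕ) {n : ℕ} (φ : BF α n) : Prop := IsSP true k φ

/-- `S ≺_{Σ_k} T` as ∈-structures. -/
def SigmaPrec (k : ℕ) (S T : Set ZFSet) : Prop :=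
  ∃ h : S ⊆ T, ∀ (m : ℕ) (φ : L.Formula (Fin m)), IsSigma k φ →
    ∀ v : Fin m → S, (φ.Realize v ↔ φ.Realize (Set.inclusion h ∘ v))

/-- `S ≺ T`: fully elementary as ∈-structures. -/
def FullPrec (S T : Set ZFSet) : Prop :=
  ∃ h : S ⊆ T, ∀ (m : ℕ) (φ : L.Formula (Fin m)),
    ∀ v : Fin m → S, (φ.Realize v ↔ φ.Realize (Set.inclusion h ∘ v))

/-- `η` is `Σ_k`-correct: `V_η ≺_{Σ_k} V`. -/
def SigmaCorrect (k : ℕ) (η : Ordinal) : Prop := SigmaPrec k (Vset η) Set.univ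

/-- The von Neumann ordinal corresponding to an ordinal, as a ZF set. -/
def ordToZF (o : Ordinal.{u}) : ZFSet.{u} :=
  ZFSet.range.{u, u} fun i : o.ToType => ordToZF ((@Ordinal.typein o.ToType (· < ·) isWellOrder_lt) i)
termination_by o
decreasing_by exact Ordinal.typein_lt_self i

-- ===== auxiliary material for stmt_9 =====

/-- Bounded-variable term. -/
def vt {n : ℕ} (i : Fin n) : L.Term (Fin 0 ⊕ Fin n) := Term.var (Sum.inr i)

/-- "x contains an empty set": `∃ e ∈ x, ∀ w ∈ e, ⊥`. -/
def phiA : BF (Fin 0) 1 :=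
  (memF (Term.var (Sum.inr (Fin.last 1))) (liftT (vt 0)) ⊓
    ((memF (Term.var (Sum.inr (Fin.last 2))) (liftT (vt 1)) ⟹ ⊥).all)).ex

/-- "every element of x is a member of an element of x". -/
def phiB : BF (Fin 0) 1 :=
  (memF (Term.var (Sum.inr (Fin.last 1))) (liftT (vt 0)) ⟹
    ((memF (Term.var (Sum.inr (Fin.last 2))) (liftT (vt 0)) ⊓
      memF (vt 1) (vt 2)).ex)).all

/-- The Σ₁ sentence "there is a set containing ∅ in which every element is a member
of another element". -/
def Phi : L.Formula (Fin 0) := (phiA ⊓ phiB).ex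

lemma dz_memF {α : Type} {n : ℕ} (t u : L.Term (α ⊕ Fin n)) : IsDeltaZero (memF t u) :=
  .of_isQF (BoundedFormula.IsAtomic.rel _ _).isQF

lemma dz_inf {α : Type} {n : ℕ} {φ ψ : BF α n} (hφ : IsDeltaZero φ) (hψ : IsDeltaZero ψ) :
    IsDeltaZero (φ ⊓ ψ) :=
  .imp (.imp hφ (.imp hψ (.of_isQF .falsum))) (.of_isQF .falsum)

lemma sigma1_Phi : IsSigma 1 Phi :=
  IsSP.ex (IsSP.of_deltaZero (dz_inf
    (IsDeltaZero.bex (vt 0) (IsDeltaZero.ball (vt 1) (.of_isQF .falsum)))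
    (IsDeltaZero.ball (vt 0) (IsDeltaZero.bex (vt 0) (dz_memF _ _)))))

@[simp] lemma relMap_memRel {S : Set ZFSet} (a b : S) :
    Structure.RelMap (M := S) memRel ![a, b] ↔ (a : ZFSet) ∈ (b : ZFSet) := Iff.rfl

lemma realize_Phi {S : Set ZFSet} (v : Fin 0 → S) :
    Phi.Realize v ↔ ∃ x : S,
      ((∃ e : S, (e : ZFSet) ∈ (x : ZFSet) ∧ ∀ w : S, (w : ZFSet) ∉ (e : ZFSet)) ∧
        ∀ y : S, (y : ZFSet) ∈ (x : ZFSet) →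
          ∃ z : S, (z : ZFSet) ∈ (x : ZFSet) ∧ (y : ZFSet) ∈ (z : ZFSet)) := by
  simp [Phi, phiA, phiB, memF, liftT, vt, Formula.Realize,
    BoundedFormula.realize_ex, BoundedFormula.realize_inf, BoundedFormula.realize_all,
    BoundedFormula.realize_imp, BoundedFormula.realize_bot, BoundedFormula.realize_rel₂,
    Term.realize_relabel, Fin.snoc_castSucc, Fin.snoc_last, Fin.snoc]

lemma rank_ofNat : ∀ n : ℕ, PSet.rank (PSet.ofNat n) ≤ (n : Ordinal)
  | 0 => by simp [PSet.ofNat, PSet.rank_empty]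
  | n + 1 => by
    rw [show PSet.ofNat (n + 1) = insert (PSet.ofNat n) (PSet.ofNat n) from rfl,
      PSet.rank_insert]
    have h := rank_ofNat n
    refine max_le ?_ (h.trans ?_)
    · rw [Nat.cast_add, Nat.cast_one, Ordinal.add_one_eq_succ]
      exact Order.succ_le_succ h
    · exact le_of_lt (by rw [Nat.cast_add, Nat.cast_one]; exact lt_add_one _)

lemma rank_omega_le : ZFSet.omega.rank ≤ Ordinal.omega0 := by
  rw [ZFSet.rank_le_iff]
  intro y hy
  induction y using Quotient.inductionOn with
  | h p =>
    obtain ⟨b, hb⟩ : p ∈ PSet.omega := hy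
    calc ZFSet.rank ⟦p⟧ = PSet.rank p := rfl
      _ = PSet.rank (PSet.ofNat b.down) := PSet.rank_congr hb
      _ ≤ (b.down : Ordinal) := rank_ofNat _
      _ < Ordinal.omega0 := Ordinal.nat_lt_omega0 _

/-- if `κ < θ`, `κ` is a limit ordinal, and `V_κ ≺_{Σ₁} V_θ`, then `V_κ`
satisfies Zermelo set theory with choice: extensionality, foundation, pairing, union,
power set, infinity, choice, and full separation. -/
theorem stmt_9 (κ θ : Ordinal.{u}) (hlim : Order.IsSuccLimit κ) (hκθ : κ < θ)
    (h : SigmaPrec 1 (Vset κ) (Vset θ)) :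
    -- extensionality
    (∀ x ∈ Vset κ, ∀ y ∈ Vset κ, (∀ z ∈ Vset κ, ((z : ZFSet) ∈ x ↔ z ∈ y)) → x = y) ∧
    -- foundation
    (∀ x ∈ Vset κ, x ≠ (∅ : ZFSet) → ∃ y ∈ x.toSet, ∀ z ∈ y.toSet, z ∉ x.toSet) ∧
    -- pairing
    (∀ x ∈ Vset κ, ∀ y ∈ Vset κ, ({x, y} : ZFSet) ∈ Vset κ) ∧
    -- union
    (∀ x ∈ Vset κ, ZFSet.sUnion x ∈ Vset κ) ∧
    -- power set
    (∀ x ∈ Vset κ, ZFSet.powerset x ∈ Vset κ) ∧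
    -- infinity
    (ZFSet.omega ∈ Vset κ) ∧
    -- choice
    (∀ x ∈ Vset κ, (∅ : ZFSet) ∉ x.toSet →
      ∃ f ∈ Vset κ, ZFSet.IsFunc x (ZFSet.sUnion x) f ∧
        ∀ y ∈ x.toSet, ∃ z ∈ y.toSet, ZFSet.pair y z ∈ f) ∧
    -- full separation
    (∀ p : ZFSet → Prop, ∀ x ∈ Vset κ, ZFSet.sep p x ∈ Vset κ) := by
  classical
  obtain ⟨hsub, hSig⟩ := h
  have hθpos : (0 : Ordinal) < θ := hlim.pos.trans hκθ
  have hωκle : Ordinal.omega0 ≤ κ := Ordinal.omega0_le_of_isSuccLimit hlim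
  have hsucc : ∀ {o : Ordinal}, o < κ → Order.succ o < κ := fun ho => hlim.succ_lt ho
  -- Φ holds in V_θ, witnessed by ω
  have hVθ : Phi.Realize (fun i : Fin 0 => i.elim0 : Fin 0 → (Vset θ : Set ZFSet)) := by
    rw [realize_Phi]
    have homθ : ZFSet.omega ∈ Vset θ :=
      lt_of_le_of_lt rank_omega_le (lt_of_le_of_lt hωκle hκθ)
    refine ⟨⟨ZFSet.omega, homθ⟩, ⟨⟨∅, ?_⟩, ZFSet.omega_zero, fun w => ZFSet.notMem_empty _⟩,
      fun y hy => ?_⟩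
    · show ZFSet.rank ∅ < θ
      rw [ZFSet.rank_empty]; exact hθpos
    · have hry : ZFSet.rank (y : ZFSet) < Ordinal.omega0 :=
        lt_of_lt_of_le (ZFSet.rank_lt_of_mem hy) rank_omega_le
      refine ⟨⟨insert (y : ZFSet) (y : ZFSet), ?_⟩, ZFSet.omega_succ hy,
        ZFSet.mem_insert_iff.2 (Or.inl rfl)⟩
      show ZFSet.rank (insert (y : ZFSet) (y : ZFSet)) < θ
      rw [ZFSet.rank_insert]
      exact max_lt (lt_of_le_of_lt (Order.succ_le_of_lt (hry.trans_le hωκle)) hκθ)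
        (lt_of_lt_of_le (hry.trans_le hωκle) hκθ.le)
  -- transfer down to V_κ
  have hcomp : (Set.inclusion hsub ∘ (fun i : Fin 0 => i.elim0)) =
      (fun i : Fin 0 => i.elim0) := funext fun i => i.elim0
  have hVκ : Phi.Realize (fun i : Fin 0 => i.elim0 : Fin 0 → (Vset κ : Set ZFSet)) := by
    rw [hSig 0 Phi sigma1_Phi (fun i : Fin 0 => i.elim0), hcomp]
    exact hVθ
  rw [realize_Phi] at hVκ
  obtain ⟨x, ⟨e, hex, hemp⟩, hstep⟩ := hVκ
  -- e is really empty and x is really infinite, hence ω < κ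
  have hstep' : ∀ y : ZFSet, y ∈ (x : ZFSet) → ∃ z, z ∈ (x : ZFSet) ∧ y ∈ z := by
    intro y hy
    obtain ⟨z, hz1, hz2⟩ := hstep ⟨y, (ZFSet.rank_lt_of_mem hy).trans x.2⟩ hy
    exact ⟨z, hz1, hz2⟩
  have hn : ∀ n : ℕ, ∃ y, y ∈ (x : ZFSet) ∧ (n : Ordinal) ≤ y.rank := by
    intro n
    induction n with
    | zero => exact ⟨e, hex, by simp⟩
    | succ n ih =>
      obtain ⟨y, hyx, hny⟩ := ih
      obtain ⟨z, hzx, hyz⟩ := hstep' y hyx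
      refine ⟨z, hzx, ?_⟩
      rw [Nat.cast_add, Nat.cast_one, Ordinal.add_one_eq_succ]
      exact Order.succ_le_of_lt (hny.trans_lt (ZFSet.rank_lt_of_mem hyz))
  have hωκ : Ordinal.omega0 < κ := by
    refine lt_of_le_of_lt (Ordinal.omega0_le.2 fun n => ?_) x.2
    obtain ⟨y, hyx, hny⟩ := hn n
    exact hny.trans (ZFSet.rank_lt_of_mem hyx).le
  refine ⟨?_, ?_, ?_, ?_, ?_, ?_, ?_, ?_⟩
  -- extensionality
  · intro a ha b hb hab
    refine ZFSet.ext fun z => ⟨fun hz => ?_, fun hz => ?_⟩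
    · exact (hab z ((ZFSet.rank_lt_of_mem hz).trans ha)).1 hz
    · exact (hab z ((ZFSet.rank_lt_of_mem hz).trans hb)).2 hz
  -- foundation
  · intro a _ hne
    obtain ⟨y, hy⟩ : ∃ y, y ∈ a := by
      by_contra h'
      push_neg at h'
      exact hne ((ZFSet.eq_empty a).2 h')
    obtain ⟨m, hm, hmin⟩ := ZFSet.mem_wf.has_min a.toSet ⟨y, hy⟩
    exact ⟨m, hm, fun z hz hza => hmin z hza hz⟩
  -- pairing
  · intro a ha b hb
    show ZFSet.rank {a, b} < κ
    rw [ZFSet.rank_pair]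
    exact max_lt (hsucc ha) (hsucc hb)
  -- union
  · intro a ha
    exact lt_of_le_of_lt (ZFSet.rank_sUnion_le a) ha
  -- power set
  · intro a ha
    show ZFSet.rank (ZFSet.powerset a) < κ
    rw [ZFSet.rank_powerset]
    exact hsucc ha
  -- infinity
  · exact lt_of_le_of_lt rank_omega_le hωκ
  -- choice
  · intro a ha hne
    have hne' : (∅ : ZFSet) ∉ a := hne
    refine ⟨ZFSet.choice a, ?_, ZFSet.choice_isFunc a hne', fun y hy => ?_⟩
    · show ZFSet.rank (ZFSet.choice a) < κ
      have hbd : ZFSet.rank (ZFSet.choice a) ≤ Order.succ (Order.succ a.rank) := by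
        rw [ZFSet.rank_le_iff]
        intro y hy
        unfold ZFSet.choice at hy
        obtain ⟨z, hza, rfl⟩ := (@ZFSet.mem_map _ (Classical.allZFSetDefinable _) _ _).1 hy
        have hgz : (Classical.epsilon fun w : ZFSet => w ∈ z) ∈ z :=
          ZFSet.choice_mem_aux a hne' z hza
        set w := Classical.epsilon fun w : ZFSet => w ∈ z with hw
        have hpair : ZFSet.pair z w = {{z}, {z, w}} := rfl
        rw [hpair, ZFSet.rank_pair, ZFSet.rank_singleton, ZFSet.rank_pair]
        have hz : z.rank < a.rank := ZFSet.rank_lt_of_mem hza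
        have hwz : w.rank < z.rank := ZFSet.rank_lt_of_mem hgz
        refine max_lt (Order.succ_lt_succ (Order.succ_lt_succ hz)) (Order.succ_lt_succ ?_)
        refine max_lt ?_ ?_
        · exact lt_of_le_of_lt (Order.succ_le_of_lt hz) (Order.lt_succ _)
        · exact lt_of_le_of_lt (Order.succ_le_of_lt (hwz.trans hz)) (Order.lt_succ _)
      exact lt_of_le_of_lt hbd (hsucc (hsucc ha))
    · refine ⟨Classical.epsilon fun w : ZFSet => w ∈ y, ZFSet.choice_mem_aux a hne' y hy, ?_⟩
      show ZFSet.pair y _ ∈ ZFSet.choice a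
      unfold ZFSet.choice
      exact (@ZFSet.mem_map _ (Classical.allZFSetDefinable _) _ _).2 ⟨y, hy, rfl⟩
  -- separation
  · intro p a ha
    refine lt_of_le_of_lt (ZFSet.rank_mono ?_) ha
    intro z hz
    exact (ZFSet.mem_sep.1 hz).1


end

end Paper
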